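/- For every n ∈ ℕ one has #L_n(u) ≤ λ C² (#A)² n. -/

import Mathlib

open List Filter

section Defs

variable {A : Type*}

/-- The segment `u_[i,j)` of the sequence `u`. -/
def seg (u : ℕ → A) (i j : ℕ) : List A :=
  (List.range (j - i)).map fun k => u (i + k)

/-- A substitution applied to a word, letter by letter. -/
def substWord (σ : A → List A) (w : List A) : List A := w.flatMap σ

/-- `σ^p` applied to a word. -/
def substPow (σ : A → List A) (p : ℕ) (w : List A) : List A := (substWord σ)^[p] w

/-- A substitution is primitive if some power of it sends every letter to a word
containing every letter. -/
def IsPrimitiveSubst (σ : A → List A) : Prop :=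
  ∃ k : ℕ, ∀ a b : A, a ∈ substPow σ k [b]

/-- `u` is a fixed point of `σ`: the image of every prefix of `u` is again a prefix of `u`. -/
def IsFixedPoint (σ : A → List A) (u : ℕ → A) : Prop :=
  ∀ m : ℕ, substWord σ (seg u 0 m) = seg u 0 (substWord σ (seg u 0 m)).length

/-- `u` is aperiodic under the left shift: `T^i u ≠ u` for all `i ≥ 1`. -/
def AperiodicSeq (u : ℕ → A) : Prop := ∀ i : ℕ, 1 ≤ i → (fun n => u (n + i)) ≠ u

/-- The set `E_p` of natural `p`-cutting points. -/
def cutPoints (σ : A → List A) (u : ℕ → A) (p : ℕ) : Set ℕ :=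
  { m | ∃ n : ℕ, m = (substPow σ p (seg u 0 n)).length }

/-- Unilateral recognizability of `σ` (with fixed point `u`). -/
def UnilaterallyRecognizable (σ : A → List A) (u : ℕ → A) : Prop :=
  ∃ L : ℕ, 1 ≤ L ∧ ∀ i j : ℕ,
    seg u i (i + L) = seg u j (j + L) → i ∈ cutPoints σ u 1 → j ∈ cutPoints σ u 1

/-- `L_n(u)`: the set of factors of `u` of length `n`. -/
def factors (u : ℕ → A) (n : ℕ) : Set (List A) := { w | ∃ i : ℕ, w = seg u i (i + n) }

/-- `L(u)`: the language of `u` (including the empty word). -/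
def lang (u : ℕ → A) : Set (List A) := { w | ∃ i n : ℕ, w = seg u i (i + n) }

/-- `w^n`: the concatenation of `n` copies of `w`. -/
def wpow (w : List A) (n : ℕ) : List A := (List.replicate n w).flatten

/-- A nonempty word `v` is primitive if `v = w^n` with `w` nonempty forces `w = v`. -/
def PrimitiveWord (v : List A) : Prop :=
  ∀ w : List A, w ≠ [] → ∀ n : ℕ, 1 ≤ n → v = wpow w n → w = v

/-- `g` is a gap of occurrences of `w` in `u` if every interval of length `g` in `ℤ₊`
contains an occurrence of `w`. -/
def IsGap (u : ℕ → A) (w : List A) (g : ℕ) : Prop := ∀ i : ℕ, w <:+: seg u i (i + g)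

/-- The minimal gap of a word. -/
noncomputable def minGap (u : ℕ → A) (w : List A) : ℕ := sInf { g | IsGap u w g }

/-- `g`: the maximum over `w ∈ L₂(u)` of the minimal gap of `w`. -/
noncomputable def gapConst (u : ℕ → A) : ℕ :=
  sSup { m | ∃ w ∈ factors u 2, m = minGap u w }

/-- A natural `p`-cutting `{α, σ^p(u_{i'}), …, σ^p(u_{i'+k-1}), β}` of `u_[i,i+ℓ)`. -/
def IsNaturalCutting (σ : A → List A) (u : ℕ → A) (p i ℓ : ℕ)
    (α : List A) (i' k : ℕ) (β : List A) : Prop :=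
  1 ≤ k ∧
  α <:+ substPow σ p [u (i' - 1)] ∧
  β <+: substPow σ p [u (i' + k)] ∧
  seg u i (i + ℓ) = α ++ substPow σ p (seg u i' (i' + k)) ++ β ∧
  i + α.length = (substPow σ p (seg u 0 i')).length

section Fin

variable [Fintype A] [Nonempty A] [DecidableEq A]

/-- The incidence matrix of a substitution: the `(a,b)` entry is `|σ(a)|_b`. -/
def incMatrix (σ : A → List A) : Matrix A A ℕ := Matrix.of fun a b => (σ a).count b

/-- The incidence matrix as a real matrix. -/
noncomputable def incMatrixR (σ : A → List A) : Matrix A A ℝ :=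
  Matrix.of fun a b => ((σ a).count b : ℝ)

/-- `S_p = max_{a ∈ A} |σ^p(a)|`. -/
def Sp (σ : A → List A) (p : ℕ) : ℕ :=
  Finset.univ.sup' Finset.univ_nonempty fun a => (substPow σ p [a]).length

/-- `I_p = min_{a ∈ A} |σ^p(a)|`. -/
def Ip (σ : A → List A) (p : ℕ) : ℕ :=
  Finset.univ.inf' Finset.univ_nonempty fun a => (substPow σ p [a]).length

/-- `C = ⌈(max_b β_b)/(min_b β_b)⌉` for a positive eigenvector `β`. -/
noncomputable def Cst (β : A → ℝ) : ℕ :=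
  ⌈(Finset.univ.sup' Finset.univ_nonempty β) / (Finset.univ.inf' Finset.univ_nonempty β)⌉₊

/-- `K = ⌈λ C² max{2(g+1), (#A)²}⌉`. -/
noncomputable def Kst (u : ℕ → A) (lam : ℝ) (β : A → ℝ) : ℕ :=
  ⌈lam * (Cst β : ℝ) ^ 2 *
    max (2 * ((gapConst u : ℝ) + 1)) ((Fintype.card A : ℝ) ^ 2)⌉₊

/-- The constant `p₀` of Lemma 4.2. -/
noncomputable def p0 (u : ℕ → A) (lam : ℝ) (β : A → ℝ) : ℕ :=
  (Kst u lam β) ^ 2 * ((Cst β) ^ 4 * (Kst u lam β + 1) + 2 * (Cst β) ^ 2 + 1) *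
    (∑ n ∈ Finset.Icc ((Cst β) ^ 2 * (Kst u lam β + 1) + 2)
        ((Kst u lam β + 1) * (Cst β) ^ 6 + 2 * (Cst β) ^ 4 + (Cst β) ^ 2 + 2), n) + 1

/-- The constant `L₀ = (C⁴(K+1)+2C²+1) S_{p₀}`. -/
noncomputable def L0 (σ : A → List A) (u : ℕ → A) (lam : ℝ) (β : A → ℝ) : ℕ :=
  ((Cst β) ^ 4 * (Kst u lam β + 1) + 2 * (Cst β) ^ 2 + 1) * Sp σ (p0 u lam β)

/-- The ℓ¹ norm of a vector. -/
def l1norm (f : A → ℝ) : ℝ := ∑ a, |f a|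

/-- The projective metric on positive row vectors. -/
noncomputable def projMetric (x y : A → ℝ) : ℝ :=
  Real.log ((Finset.univ.sup' Finset.univ_nonempty fun a => x a / y a) /
    (Finset.univ.inf' Finset.univ_nonempty fun a => x a / y a))

/-- The Birkhoff contraction coefficient of a matrix. -/
noncomputable def birkhoff (M : Matrix A A ℝ) : ℝ :=
  sSup { r | ∃ x y : A → ℝ, (∀ a, 0 < x a) ∧ (∀ a, 0 < y a) ∧
    LinearIndependent ℝ ![x, y] ∧
    r = projMetric (Matrix.vecMul x M) (Matrix.vecMul y M) / projMetric x y }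

end Fin

/-- Membership in the vertex set `V^*`: pairs `(xac, ybc)` of factors of `u` of length
`N + L₁ + 1` with `a ≠ b` and `|c| = L₁`. -/
def memVstar (u : ℕ → A) (N L₁ : ℕ) (p : List A × List A) : Prop :=
  ∃ (x y c : List A) (a b : A), a ≠ b ∧
    x.length = N ∧ y.length = N ∧ c.length = L₁ ∧
    p.1 = x ++ a :: c ∧ p.2 = y ++ b :: c ∧
    p.1 ∈ factors u (N + L₁ + 1) ∧ p.2 ∈ factors u (N + L₁ + 1)

/-- An edge between representatives: there is a word `w` with `s'w` a suffix of `σ(s)` and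
`t'w` a suffix of `σ(t)`. -/
def edgeRep (σ : A → List A) (p q : List A × List A) : Prop :=
  ∃ w : List A, w ≠ [] ∧ (q.1 ++ w) <:+ substWord σ p.1 ∧ (q.2 ++ w) <:+ substWord σ p.2

/-- An edge in the graph `G` between the unordered pairs represented by `p` and `q`. -/
def graphEdge (σ : A → List A) (p q : List A × List A) : Prop :=
  edgeRep σ p q ∨ edgeRep σ p q.swap ∨ edgeRep σ p.swap q ∨ edgeRep σ p.swap q.swap

/-- A representative generates a gap of natural 1-cutting points. -/
def genGapRep (σ : A → List A) (p : List A × List A) : Prop :=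
  ∃ (α β : A) (γ δ : List A),
    (σ α <:+ σ β ∧ σ α ≠ σ β) ∧
    List.Forall₂ (fun s t => σ s = σ t) γ δ ∧
    (α :: γ) <:+ substWord σ p.1 ∧ (β :: δ) <:+ substWord σ p.2

/-- The unordered pair represented by `p` generates a gap of natural 1-cutting points. -/
def genGap (σ : A → List A) (p : List A × List A) : Prop :=
  genGapRep σ p ∨ genGapRep σ p.swap

/-- The list of consecutive two-letter blocks of a word. -/
def pairsList (l : List A) : List (List A) :=
  List.zipWith (fun a b => [a, b]) l l.tail

-- aux lemmas
theorem aux_seg_length (u : ℕ → A) (i j : ℕ) : (seg u i j).length = j - i := by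
  simp [seg]

theorem aux_seg_append (u : ℕ → A) {a b c : ℕ} (hab : a ≤ b) (hbc : b ≤ c) :
    seg u a c = seg u a b ++ seg u b c := by
  unfold seg
  have h : c - a = (b - a) + (c - b) := by omega
  rw [h, List.range_add, List.map_append, List.map_map]
  congr 1
  apply List.map_congr_left
  intro k _
  simp only [Function.comp_apply]
  congr 1
  omega

theorem aux_seg_single (u : ℕ → A) (k : ℕ) : seg u k (k+1) = [u k] := by
  simp [seg, List.range_succ, List.range_zero]

theorem aux_substWord_append (σ : A → List A) (w₁ w₂ : List A) :
    substWord σ (w₁ ++ w₂) = substWord σ w₁ ++ substWord σ w₂ :=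
  List.flatMap_append

theorem aux_substPow_append (σ : A → List A) (p : ℕ) (w₁ w₂ : List A) :
    substPow σ p (w₁ ++ w₂) = substPow σ p w₁ ++ substPow σ p w₂ := by
  induction p generalizing w₁ w₂ with
  | zero => simp [substPow]
  | succ p ih =>
    simp only [substPow, Function.iterate_succ_apply] at *
    rw [aux_substWord_append, ih]

theorem aux_substPow_nil (σ : A → List A) (p : ℕ) : substPow σ p [] = [] := by
  induction p with
  | zero => rfl
  | succ p ih => simp [substPow, Function.iterate_succ_apply, substWord] at *; exact ih

theorem aux_substPow_ne_nil (σ : A → List A) (hσne : ∀ a, σ a ≠ []) (p : ℕ) (a : A) :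
    substPow σ p [a] ≠ [] := by
  induction p with
  | zero => simp [substPow]
  | succ p ih =>
    rw [substPow, Function.iterate_succ_apply']
    obtain ⟨x, l, hx⟩ := List.exists_cons_of_ne_nil ih
    rw [substPow] at hx
    rw [hx]
    show substWord σ (x :: l) ≠ []
    simp only [substWord, List.flatMap_cons]
    intro h
    exact hσne x (List.append_eq_nil_iff.mp h).1

theorem aux_substPow_add (σ : A → List A) (p q : ℕ) (w : List A) :
    substPow σ (p + q) w = substPow σ p (substPow σ q w) :=
  Function.iterate_add_apply _ _ _ _

theorem aux_fix_pow {σ : A → List A} {u : ℕ → A}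
    (hfix : ∀ m : ℕ, substWord σ (seg u 0 m) = seg u 0 (substWord σ (seg u 0 m)).length)
    (p m : ℕ) :
    substPow σ p (seg u 0 m) = seg u 0 (substPow σ p (seg u 0 m)).length := by
  induction p with
  | zero =>
    simp only [substPow, Function.iterate_zero, id_eq]
    rw [aux_seg_length]
    simp
  | succ p ih =>
    rw [substPow, Function.iterate_succ_apply', ← substPow, ih]
    exact hfix _

theorem aux_sum_map_count [Fintype A] [DecidableEq A] (β : A → ℝ) (l : List A) :
    (l.map β).sum = ∑ b, (l.count b : ℝ) * β b := by
  induction l with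
  | nil => simp
  | cons x l ih =>
    simp only [List.map_cons, List.sum_cons, ih, List.count_cons]
    push_cast
    rw [Finset.sum_congr rfl (fun b _ => add_mul (l.count b : ℝ) _ (β b)),
      Finset.sum_add_distrib]
    simp [beq_iff_eq, ite_mul, Finset.sum_ite_eq]
    ring


end Defs

set_option maxHeartbeats 2000000 in
/-- Lemma 2.4 (word complexity): `#L_n(u) ≤ λ C² (#A)² n` for every `n ∈ ℕ`. -/
theorem stmt_5 (A : Type*) [Fintype A] [DecidableEq A] [Nonempty A]
    (h2 : 2 ≤ Fintype.card A)
    (σ : A → List A) (hσne : ∀ a, σ a ≠ [])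
    (hprim : IsPrimitiveSubst σ)
    (u : ℕ → A) (hfix : IsFixedPoint σ u) (hap : AperiodicSeq u)
    (lam : ℝ) (β : A → ℝ) (hβ : ∀ a, 0 < β a)
    (heig : (incMatrixR σ).mulVec β = lam • β) :
    ∀ n : ℕ, 1 ≤ n →
      ((factors u n).ncard : ℝ) ≤ lam * (Cst β : ℝ) ^ 2 * (Fintype.card A : ℝ) ^ 2 * n := by
  classical
  intro n hn
  set minβ := Finset.univ.inf' Finset.univ_nonempty β with hminβ
  set maxβ := Finset.univ.sup' Finset.univ_nonempty β with hmaxβ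
  obtain ⟨a₀, -, ha₀⟩ := Finset.exists_mem_eq_inf' (Finset.univ_nonempty (α := A)) β
  rw [← hminβ] at ha₀
  have hminpos : 0 < minβ := ha₀ ▸ hβ a₀
  have hmin_le : ∀ a, minβ ≤ β a := fun a => Finset.inf'_le _ (Finset.mem_univ a)
  have hle_max : ∀ a, β a ≤ maxβ := fun a => Finset.le_sup' _ (Finset.mem_univ a)
  have hminmax : minβ ≤ maxβ := ha₀ ▸ hle_max a₀
  have hmaxpos : 0 < maxβ := lt_of_lt_of_le hminpos hminmax
  set φ : List A → ℝ := fun w => (w.map β).sum with hφ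
  have hφσ : ∀ a, φ (σ a) = lam * β a := by
    intro a
    have h1 : ∑ b, ((σ a).count b : ℝ) * β b = lam * β a := by
      have := congrFun heig a
      simpa [Matrix.mulVec, dotProduct, incMatrixR] using this
    rw [hφ]; simp only
    rw [aux_sum_map_count]; exact h1
  have hφlow : ∀ w : List A, minβ * (w.length : ℝ) ≤ φ w := by
    intro w
    have := List.card_nsmul_le_sum (w.map β) minβ (by
      intro x hx; obtain ⟨a, -, rfl⟩ := List.mem_map.mp hx; exact hmin_le a)
    simpa [nsmul_eq_mul, mul_comm] using this
  have hφhigh : ∀ w : List A, φ w ≤ maxβ * (w.length : ℝ) := by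
    intro w
    have := List.sum_le_card_nsmul (w.map β) maxβ (by
      intro x hx; obtain ⟨a, -, rfl⟩ := List.mem_map.mp hx; exact hle_max a)
    simpa [nsmul_eq_mul, mul_comm] using this
  have hφsubst : ∀ w, φ (substWord σ w) = lam * φ w := by
    intro w
    induction w with
    | nil => simp [substWord, hφ]
    | cons x l ih =>
      have hcons : substWord σ (x :: l) = σ x ++ substWord σ l := rfl
      rw [hcons]
      simp only [hφ, List.map_append, List.sum_append, List.map_cons, List.sum_cons] at *
      rw [ih]
      have : ((σ x).map β).sum = lam * β x := hφσ x
      rw [this]; ring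
  have hφpow : ∀ p a, φ (substPow σ p [a]) = lam ^ p * β a := by
    intro p
    induction p with
    | zero => intro a; simp [substPow, hφ]
    | succ p ih =>
      intro a
      rw [substPow, Function.iterate_succ_apply', ← substPow, hφsubst, ih]; ring
  have hlam1 : 1 ≤ lam := by
    have h2 : minβ * (((σ a₀).length : ℕ) : ℝ) ≤ lam * β a₀ := by
      rw [← hφσ a₀]; exact hφlow _
    have hc : (1:ℝ) ≤ (((σ a₀).length : ℕ) : ℝ) := by
      exact_mod_cast List.length_pos_iff.mpr (hσne a₀)
    nlinarith [hminpos, ha₀, hβ a₀]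
  have hlampos : (0:ℝ) < lam := by linarith
  have hIp_le : ∀ p a, Ip σ p ≤ (substPow σ p [a]).length := by
    intro p a
    unfold Ip
    exact Finset.inf'_le _ (Finset.mem_univ a)
  have hSp_ge : ∀ p a, (substPow σ p [a]).length ≤ Sp σ p := by
    intro p a
    unfold Sp
    exact Finset.le_sup' (fun a => (substPow σ p [a]).length) (Finset.mem_univ a)
  have hflatlen : ∀ p (w : List A), Ip σ p * w.length ≤ (substPow σ p w).length := by
    intro p w
    induction w with
    | nil => simp [aux_substPow_nil]
    | cons x l ih =>
      have hcons : substPow σ p (x :: l) = substPow σ p [x] ++ substPow σ p l := by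
        rw [← aux_substPow_append]; rfl
      rw [hcons, List.length_append, List.length_cons]
      have h2 : Ip σ p * (l.length + 1) = Ip σ p + Ip σ p * l.length := by ring
      rw [h2]
      exact Nat.add_le_add (hIp_le p x) ih
  obtain ⟨k, hk⟩ := hprim
  have hk2 : ∀ b, 2 ≤ (substPow σ k [b]).length := by
    intro b
    have huniv : (substPow σ k [b]).toFinset = Finset.univ :=
      Finset.eq_univ_of_forall fun a => List.mem_toFinset.mpr (hk a b)
    calc 2 ≤ Fintype.card A := h2
    _ = (substPow σ k [b]).toFinset.card := by rw [huniv, Finset.card_univ]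
    _ ≤ _ := List.toFinset_card_le _
  have hpow2 : ∀ j, 2 ^ j ≤ Ip σ (j * k) := by
    intro j
    induction j with
    | zero =>
      unfold Ip
      apply Finset.le_inf'
      intro b _
      simp [substPow]
    | succ j ih =>
      unfold Ip
      apply Finset.le_inf'
      intro b _
      have he : (j+1) * k = j * k + k := by ring
      rw [he, aux_substPow_add]
      calc 2 ^ (j+1) = 2 ^ j * 2 := by ring
      _ ≤ Ip σ (j*k) * (substPow σ k [b]).length := Nat.mul_le_mul ih (hk2 b)
      _ ≤ _ := hflatlen _ _
  have hPex : ∃ p, n ≤ Ip σ p :=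
    ⟨n * k, le_trans (le_of_lt (Nat.lt_two_pow_self (n := n))) (hpow2 n)⟩
  set P := Nat.find hPex with hPdef
  have hPspec : n ≤ Ip σ P := Nat.find_spec hPex
  have hCge : maxβ / minβ ≤ (Cst β : ℝ) := by
    rw [Cst, hminβ, hmaxβ] at *
    exact Nat.le_ceil _
  have hratio1 : (1:ℝ) ≤ maxβ / minβ := (one_le_div hminpos).mpr hminmax
  have hC1 : (1:ℝ) ≤ (Cst β : ℝ) := le_trans hratio1 hCge
  -- bound on Sp σ P
  have hSbound : (Sp σ P : ℝ) ≤ lam * (Cst β : ℝ)^2 * n := by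
    obtain ⟨aS, -, haS⟩ := Finset.exists_mem_eq_sup' (Finset.univ_nonempty (α := A))
      (fun a => (substPow σ P [a]).length)
    have hSa : (Sp σ P : ℝ) = (((substPow σ P [aS]).length : ℕ) : ℝ) := by
      rw [Sp, haS]
    have hup : minβ * (((substPow σ P [aS]).length : ℕ) : ℝ) ≤ lam ^ P * maxβ := by
      have h1 : minβ * (((substPow σ P [aS]).length : ℕ) : ℝ) ≤ φ (substPow σ P [aS]) :=
        hφlow _
      rw [hφpow P aS] at h1
      nlinarith [pow_pos hlampos P, hle_max aS]
    rcases hQ : P with _ | q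
    · -- P = 0
      rw [hQ] at hSa
      have : ((substPow σ 0 [aS]).length : ℕ) = 1 := by simp [substPow]
      rw [this] at hSa
      rw [hSa]
      have hn1 : (1:ℝ) ≤ (n:ℝ) := by exact_mod_cast hn
      have hC2 : (1:ℝ) ≤ (Cst β : ℝ)^2 := by nlinarith [hC1]
      have hlC : (1:ℝ) ≤ lam * (Cst β : ℝ)^2 := by nlinarith [hlam1, hC2]
      push_cast
      nlinarith [hlC, hn1]
    · -- P = q + 1
      rw [hQ] at hSa hup
      have hq : ¬ n ≤ Ip σ q := Nat.find_min hPex (by omega)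
      have hIqn : ((Ip σ q : ℕ) : ℝ) ≤ (n : ℝ) := by
        have : Ip σ q < n := by omega
        exact_mod_cast this.le
      obtain ⟨aI, -, haI⟩ := Finset.exists_mem_eq_inf' (Finset.univ_nonempty (α := A))
        (fun a => (substPow σ q [a]).length)
      have hlow2 : lam ^ q * minβ ≤ maxβ * ((Ip σ q : ℕ) : ℝ) := by
        have h1 : lam ^ q * β aI ≤ maxβ * (((substPow σ q [aI]).length : ℕ) : ℝ) := by
          rw [← hφpow q aI]; exact hφhigh _
        have h2 : ((Ip σ q : ℕ) : ℝ) = (((substPow σ q [aI]).length : ℕ) : ℝ) := by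
          rw [Ip, haI]
        rw [h2]
        have hpq := pow_pos hlampos q
        nlinarith [hmin_le aI]
      set r : ℝ := maxβ / minβ with hr
      have hrpos : 0 < r := div_pos hmaxpos hminpos
      have h1 : (((substPow σ (q+1) [aS]).length : ℕ) : ℝ) ≤ lam * (lam ^ q * r) := by
        have e : lam * (lam ^ q * r) * minβ = lam ^ (q+1) * maxβ := by
          rw [hr]; field_simp; ring
        rw [← mul_le_mul_iff_of_pos_right hminpos, e]
        nlinarith [hup]
      have h2 : lam ^ q ≤ r * ((Ip σ q : ℕ) : ℝ) := by
        rw [hr, div_mul_eq_mul_div, le_div_iff₀ hminpos]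
        nlinarith [hlow2]
      have key : lam ^ q * r ≤ (Cst β : ℝ)^2 * n := by
        calc lam ^ q * r ≤ (r * ((Ip σ q : ℕ) : ℝ)) * r :=
              mul_le_mul_of_nonneg_right h2 hrpos.le
        _ = (r * r) * ((Ip σ q : ℕ) : ℝ) := by ring
        _ ≤ ((Cst β : ℝ) * (Cst β : ℝ)) * n := by
            have hCnn : (0:ℝ) ≤ (Cst β : ℝ) := by linarith
            have hrr : r * r ≤ (Cst β : ℝ) * (Cst β : ℝ) :=
              mul_le_mul hCge hCge hrpos.le hCnn
            exact mul_le_mul hrr hIqn (Nat.cast_nonneg _) (by positivity)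
        _ = (Cst β : ℝ)^2 * n := by ring
      rw [hSa]
      calc (((substPow σ (q+1) [aS]).length : ℕ) : ℝ) ≤ lam * (lam ^ q * r) := h1
      _ ≤ lam * ((Cst β : ℝ)^2 * n) := mul_le_mul_of_nonneg_left key hlampos.le
      _ = lam * (Cst β : ℝ)^2 * n := by ring
  -- counting
  have hn_le_len : ∀ a, n ≤ (substPow σ P [a]).length :=
    fun a => le_trans hPspec (hIp_le P a)
  set m : ℕ → ℕ := fun j => (substPow σ P (seg u 0 j)).length with hm
  have hm0 : m 0 = 0 := by simp [hm, seg, aux_substPow_nil]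
  have hmsucc : ∀ j, m (j+1) = m j + (substPow σ P [u j]).length := by
    intro j
    have hsplit : seg u 0 (j+1) = seg u 0 j ++ [u j] := by
      rw [aux_seg_append u (Nat.zero_le j) (by omega), aux_seg_single]
    simp only [hm]
    rw [hsplit, aux_substPow_append, List.length_append]
  have hmlt : ∀ j, m j < m (j+1) := by
    intro j
    have := List.length_pos_iff.mpr (aux_substPow_ne_nil σ hσne P (u j))
    rw [hmsucc]; omega
  have hmono : Monotone m := monotone_nat_of_le_succ (fun j => (hmlt j).le)
  have hfind : ∀ i, ∃ j, m j ≤ i ∧ i < m (j+1) := by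
    intro i
    induction i with
    | zero => exact ⟨0, hm0.le, by have := hmlt 0; omega⟩
    | succ i ih =>
      obtain ⟨j, hj1, hj2⟩ := ih
      by_cases hcase : i + 1 < m (j+1)
      · exact ⟨j, by omega, hcase⟩
      · exact ⟨j+1, by omega, by have := hmlt (j+1); omega⟩
  have hseg0 : ∀ j, substPow σ P (seg u 0 j) = seg u 0 (m j) :=
    fun j => aux_fix_pow hfix P j
  set f : A × A × Fin (Sp σ P) → List A :=
    fun t => ((substPow σ P [t.1] ++ substPow σ P [t.2.1]).drop (t.2.2 : ℕ)).take n with hfdef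
  have hsubset : factors u n ⊆ ↑(Finset.image f Finset.univ) := by
    intro w hw
    obtain ⟨i, rfl⟩ := hw
    obtain ⟨j, hj1, hj2⟩ := hfind i
    have hlen1 := hmsucc j
    have hlen2 : m (j+2) = m (j+1) + (substPow σ P [u (j+1)]).length := hmsucc (j+1)
    have hjlt : i - m j < (substPow σ P [u j]).length := by omega
    have hjS : i - m j < Sp σ P := lt_of_lt_of_le hjlt (hSp_ge P (u j))
    rw [Finset.coe_image, Set.mem_image]
    refine ⟨(u j, u (j+1), ⟨i - m j, hjS⟩), by simp, ?_⟩
    show ((substPow σ P [u j] ++ substPow σ P [u (j+1)]).drop (i - m j)).take n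
        = seg u i (i + n)
    have hcat : substPow σ P [u j] ++ substPow σ P [u (j+1)] = seg u (m j) (m (j+2)) := by
      have hsplit2 : seg u 0 (j+2) = seg u 0 j ++ (seg u j (j+1) ++ seg u (j+1) (j+2)) := by
        rw [← aux_seg_append u (by omega) (by omega),
          ← aux_seg_append u (by omega) (by omega)]
      have e1 : substPow σ P (seg u 0 (j+2))
          = seg u 0 (m j) ++ (substPow σ P [u j] ++ substPow σ P [u (j+1)]) := by
        rw [hsplit2, aux_substPow_append, aux_substPow_append, aux_seg_single,
          aux_seg_single, hseg0 j]
      have e2 : substPow σ P (seg u 0 (j+2)) = seg u 0 (m j) ++ seg u (m j) (m (j+2)) := by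
        rw [hseg0 (j+2)]
        exact aux_seg_append u (Nat.zero_le _) (hmono (by omega))
      exact List.append_cancel_left (e1.symm.trans e2)
    have hin : i + n ≤ m (j+2) := by
      have := hn_le_len (u (j+1)); omega
    rw [hcat]
    have hsplitA : seg u (m j) (m (j+2)) = seg u (m j) i ++ seg u i (m (j+2)) :=
      aux_seg_append u hj1 (by omega)
    rw [hsplitA, List.drop_left' (by rw [aux_seg_length])]
    have hsplitB : seg u i (m (j+2)) = seg u i (i+n) ++ seg u (i+n) (m (j+2)) :=
      aux_seg_append u (by omega) hin
    rw [hsplitB, List.take_left' (by rw [aux_seg_length]; omega)]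
  have hcount : (factors u n).ncard ≤ Fintype.card A * (Fintype.card A * Sp σ P) := by
    calc (factors u n).ncard
        ≤ ((Finset.image f Finset.univ : Finset (List A)) : Set (List A)).ncard :=
          Set.ncard_le_ncard hsubset (Finset.finite_toSet _)
    _ = (Finset.image f Finset.univ).card := Set.ncard_coe_finset _
    _ ≤ (Finset.univ : Finset (A × A × Fin (Sp σ P))).card := Finset.card_image_le
    _ = Fintype.card (A × A × Fin (Sp σ P)) := Finset.card_univ
    _ = Fintype.card A * (Fintype.card A * Sp σ P) := by simp
  have hcA : (0:ℝ) ≤ (Fintype.card A : ℝ)^2 := by positivity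
  calc ((factors u n).ncard : ℝ)
      ≤ (Fintype.card A : ℝ)^2 * (Sp σ P : ℝ) := by
        have := hcount
        have h' : ((factors u n).ncard : ℝ)
            ≤ (Fintype.card A : ℝ) * ((Fintype.card A : ℝ) * (Sp σ P : ℝ)) := by
          exact_mod_cast this
        nlinarith [h']
  _ ≤ (Fintype.card A : ℝ)^2 * (lam * (Cst β : ℝ)^2 * n) :=
      mul_le_mul_of_nonneg_left hSbound hcA
  _ = lam * (Cst β : ℝ)^2 * (Fintype.card A : ℝ)^2 * n := by ring
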